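/- For m ≥ 1, the maximum size of a family C of subsets of {1,...,m} such that no member contains another and any two members have nonempty intersection is C(m, ⌊(m+2)/2⌋). -/

import Mathlib

open Finset Nat Finset.Colex
open scoped FinsetFamily

namespace MilnerAux

variable {n : ℕ}

/-- Double counting: an `r`-uniform family avoiding a fixed element in a ground set of size
`≤ 2r` has shadow at least as large as itself. -/
lemma card_le_card_shadow_of_avoid {α : Type*} [DecidableEq α] [Fintype α]
    {𝒞 : Finset (Finset α)} {r : ℕ} (hr : 0 < r)
    (h𝒞 : (𝒞 : Set (Finset α)).Sized r) (a : α) (ha : ∀ A ∈ 𝒞, a ∉ A)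
    (hcard : Fintype.card α ≤ 2 * r) : #𝒞 ≤ #(∂ 𝒞) := by
  classical
  obtain rfl | ⟨A₁, hA₁⟩ := 𝒞.eq_empty_or_nonempty
  · simp
  have hrle : r ≤ Fintype.card α := by
    have := h𝒞 hA₁; rw [← this]; exact card_le_univ A₁
  have key : #𝒞 * r ≤ #(∂ 𝒞) * (Fintype.card α - r) := by
    refine card_mul_le_card_mul (fun A B => B ⊆ A) ?_ ?_
    · intro A hA
      rw [← h𝒞 hA, ← Finset.card_image_of_injOn A.erase_injOn]
      refine card_le_card ?_
      simp_rw [image_subset_iff, mem_bipartiteAbove]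
      exact fun x hx => ⟨erase_mem_shadow hA hx, erase_subset _ _⟩
    · intro B hB
      obtain ⟨A₀, hA₀, hBA₀⟩ := exists_subset_of_mem_shadow hB
      have haB : a ∉ B := fun h => ha A₀ hA₀ (hBA₀ h)
      have hBcard : #B = r - 1 := h𝒞.shadow hB
      have hsub : 𝒞.bipartiteBelow (fun A B => B ⊆ A) B ⊆
          ((insert a B)ᶜ).image (fun x => insert x B) := by
        intro A hA
        rw [mem_bipartiteBelow] at hA
        obtain ⟨hA𝒞, hBA⟩ := hA
        have hAsub : a ∉ A := ha A hA𝒞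
        have hcard' : #(A \ B) = 1 := by
          rw [card_sdiff_of_subset hBA, h𝒞 hA𝒞, hBcard]; omega
        obtain ⟨x, hx⟩ := card_eq_one.1 hcard'
        have hxA : x ∈ A := by
          have : x ∈ A \ B := hx ▸ mem_singleton_self x
          exact (mem_sdiff.1 this).1
        have hxB : x ∉ B := by
          have : x ∈ A \ B := hx ▸ mem_singleton_self x
          exact (mem_sdiff.1 this).2
        have hAeq : A = insert x B := by
          have h1 : A \ B ∪ B = A := sdiff_union_of_subset hBA
          rw [hx] at h1
          rw [← h1, insert_eq]
        refine mem_image.2 ⟨x, ?_, hAeq.symm⟩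
        rw [mem_compl, mem_insert]
        push_neg
        exact ⟨fun h => hAsub (h ▸ hxA), hxB⟩
      calc #(𝒞.bipartiteBelow (fun A B => B ⊆ A) B)
          ≤ #(((insert a B)ᶜ).image (fun x => insert x B)) := card_le_card hsub
        _ ≤ #((insert a B)ᶜ) := card_image_le
        _ = Fintype.card α - r := by
            rw [card_compl, card_insert_of_notMem haB, hBcard]; omega
  have h2 : #(∂ 𝒞) * (Fintype.card α - r) ≤ #(∂ 𝒞) * r :=
    Nat.mul_le_mul_left _ (by omega)
  exact Nat.le_of_mul_le_mul_right (key.trans h2) hr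

/-- The `d` smallest elements of a finset in a linear order. -/
lemma exists_lower_subset {β : Type*} [LinearOrder β] [DecidableEq β] (s : Finset β) :
    ∀ d : ℕ, d ≤ #s → ∃ u ⊆ s, #u = d ∧ ∀ x ∈ u, ∀ y ∈ s, y < x → y ∈ u := by
  intro d
  induction d with
  | zero => exact fun _ => ⟨∅, empty_subset _, card_empty, by simp⟩
  | succ d ih =>
    intro hd
    obtain ⟨u, hus, hucard, hulow⟩ := ih (by omega)
    have hne : (s \ u).Nonempty := by
      rw [← card_pos, card_sdiff_of_subset hus]
      omega
    set x := (s \ u).min' hne with hx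
    have hxs : x ∈ s \ u := min'_mem _ hne
    have hxs' : x ∈ s := (mem_sdiff.1 hxs).1
    have hxu : x ∉ u := (mem_sdiff.1 hxs).2
    refine ⟨insert x u, insert_subset hxs' hus, ?_, ?_⟩
    · rw [card_insert_of_notMem hxu, hucard]
    · intro z hz y hy hyz
      rw [mem_insert] at hz
      rw [mem_insert]
      obtain rfl | hzu := hz
      · by_cases hyu : y ∈ u
        · exact Or.inr hyu
        · exact absurd (min'_le _ y (mem_sdiff.2 ⟨hy, hyu⟩)) (not_le.2 hyz)
      · exact Or.inr (hulow z hzu y hy hyz)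

lemma exists_initSeg_avoid' (hn : 0 < n) (a : Fin n) (hatop : ∀ b : Fin n, b ≤ a)
    (r d : ℕ) (hd : d ≤ (n - 1).choose r) :
    ∃ 𝒞 : Finset (Finset (Fin n)), #𝒞 = d ∧ IsInitSeg 𝒞 r ∧ ∀ A ∈ 𝒞, a ∉ A := by
  classical
  obtain ⟨T, hT⟩ : ∃ T : Finset (Finset (Fin n)), T = powersetCard r ({a}ᶜ : Finset (Fin n)) :=
    ⟨_, rfl⟩
  have hTmem : ∀ B : Finset (Fin n), B ∈ T ↔ a ∉ B ∧ #B = r := by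
    intro B
    rw [hT, mem_powersetCard]
    constructor
    · rintro ⟨h1, h2⟩
      refine ⟨fun hv => ?_, h2⟩
      have := h1 hv
      simp at this
    · rintro ⟨h1, h2⟩
      refine ⟨fun v hv => ?_, h2⟩
      rw [mem_compl, mem_singleton]
      exact fun hEq => h1 (hEq ▸ hv)
  have hTcard : #T = (n - 1).choose r := by
    rw [hT, card_powersetCard, card_compl, card_singleton, Fintype.card_fin]
  obtain ⟨T', hT'⟩ : ∃ T' : Finset (Colex (Finset (Fin n))), T' = T.image toColex := ⟨_, rfl⟩
  have hT'mem : ∀ x : Colex (Finset (Fin n)), x ∈ T' ↔ ofColex x ∈ T := by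
    intro x
    rw [hT', mem_image]
    constructor
    · rintro ⟨B, hB, rfl⟩
      rwa [ofColex_toColex]
    · intro h
      exact ⟨ofColex x, h, toColex_ofColex x⟩
  have hT'card : #T' = (n - 1).choose r := by
    rw [hT', Finset.card_image_of_injective _ toColex.injective, hTcard]
  obtain ⟨u, huT', hucard, hulow⟩ := exists_lower_subset T' d (by omega)
  refine ⟨u.image ofColex, ?_, ⟨?_, ?_⟩, ?_⟩
  · rw [Finset.card_image_of_injective _ (fun x y h => ?_), hucard]
    have := congrArg toColex h
    rwa [toColex_ofColex, toColex_ofColex] at this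
  · -- sized
    intro A hA
    simp only [coe_image, Set.mem_image, mem_coe] at hA
    obtain ⟨x, hx, rfl⟩ := hA
    exact ((hTmem _).1 ((hT'mem x).1 (huT' hx))).2
  · -- downward closed
    rintro s t hs ⟨hts, htr⟩
    rw [mem_image] at hs
    obtain ⟨x, hx, rfl⟩ := hs
    have hsT : ofColex x ∈ T := (hT'mem x).1 (huT' hx)
    have has : a ∉ ofColex x := ((hTmem _).1 hsT).1
    have hat : a ∉ t := by
      intro hat'
      have hlt : toColex (ofColex x) < toColex t := by
        rw [toColex_lt_toColex_iff_exists_forall_lt]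
        exact ⟨a, hat', has, fun b hb _ => lt_of_le_of_ne (hatop b)
          (ne_of_mem_of_not_mem hb has)⟩
      rw [toColex_ofColex] at hlt
      exact absurd (hlt.trans hts) (lt_irrefl _)
    have htT : t ∈ T := (hTmem t).2 ⟨hat, htr⟩
    have htT' : toColex t ∈ T' := (hT'mem _).2 (by rwa [ofColex_toColex])
    have htu : toColex t ∈ u := by
      refine hulow x hx (toColex t) htT' ?_
      rwa [← toColex_ofColex x] at hts
      
    exact mem_image.2 ⟨toColex t, htu, rfl⟩
  · -- avoid a
    intro A hA
    rw [mem_image] at hA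
    obtain ⟨x, hx, rfl⟩ := hA
    exact ((hTmem _).1 ((hT'mem x).1 (huT' hx))).1

/-- Kruskal–Katona application: an `r`-uniform family in `Fin n`, `n ≤ 2r`, of size at most
`(n-1).choose r`, has shadow at least as large as itself. -/
lemma card_le_card_shadow_of_small {r : ℕ} (hr : 0 < r) (hn : 0 < n)
    {ℬ : Finset (Finset (Fin n))} (h : (ℬ : Set (Finset (Fin n))).Sized r)
    (hb : #ℬ ≤ (n - 1).choose r) (hn2 : n ≤ 2 * r) : #ℬ ≤ #(∂ ℬ) := by
  classical
  have hatop : ∀ b : Fin n, b ≤ (⟨n - 1, by omega⟩ : Fin n) := by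
    intro b
    rw [Fin.le_def]
    show (b : ℕ) ≤ n - 1
    have := b.2
    omega
  obtain ⟨𝒞, h𝒞card, h𝒞init, h𝒞avoid⟩ := exists_initSeg_avoid' hn ⟨n - 1, by omega⟩ hatop r #ℬ hb
  have hKK : #(∂ 𝒞) ≤ #(∂ ℬ) := by
    have h' := Finset.kruskal_katona (𝒜 := ℬ) (𝒞 := 𝒞) h (le_of_eq h𝒞card) h𝒞init
    convert h' using 3
  have h1 : #𝒞 ≤ #(∂ 𝒞) :=
    card_le_card_shadow_of_avoid hr h𝒞init.1 _ h𝒞avoid (by simpa using hn2)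
  omega

/-- An intersecting `l`-uniform family with `2l ≤ m` has upper shadow at least as large. -/
lemma card_le_card_upShadow {m : ℕ} {𝒜 : Finset (Finset (Fin m))} {l : ℕ}
    (hl : 0 < l) (h2l : 2 * l ≤ m)
    (hs : (𝒜 : Set (Finset (Fin m))).Sized l)
    (hint : ∀ A ∈ 𝒜, ∀ B ∈ 𝒜, (A ∩ B).Nonempty) : #𝒜 ≤ #(∂⁺ 𝒜) := by
  classical
  have hm : 0 < m := by omega
  have hℬcard : #(𝒜ᶜˢ) = #𝒜 := card_compls 𝒜
  have hℬsized : ((𝒜ᶜˢ : Finset (Finset (Fin m))) : Set (Finset (Fin m))).Sized (m - l) := by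
    have := hs.compls
    rwa [Fintype.card_fin] at this
  have hshadow : #(∂ (𝒜ᶜˢ)) = #(∂⁺ 𝒜) := by
    rw [shadow_compls, card_compls]
  rcases lt_or_eq_of_le h2l with h2l' | h2l'
  · -- strict case : local LYM
    have key := card_mul_le_card_shadow_mul hℬsized
    rw [Fintype.card_fin] at key
    have h3 : m - (m - l) + 1 ≤ m - l := by omega
    have h4 : #(𝒜ᶜˢ) * (m - l) ≤ #(∂ (𝒜ᶜˢ)) * (m - l) :=
      key.trans (Nat.mul_le_mul_left _ h3)
    have := Nat.le_of_mul_le_mul_right h4 (by omega : 0 < m - l)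
    omega
  · -- boundary case : m = 2l
    have hml : m - l = l := by omega
    rw [hml] at hℬsized
    have hdisj : Disjoint 𝒜 𝒜ᶜˢ := by
      rw [Finset.disjoint_left]
      intro X hX𝒜 hXℬ
      rw [mem_compls] at hXℬ
      have hint' := hint X hX𝒜 Xᶜ hXℬ
      rw [inter_compl] at hint'
      exact hint'.ne_empty rfl
    have hsub𝒜 : 𝒜 ⊆ powersetCard l univ := fun A hA =>
      mem_powersetCard.2 ⟨subset_univ _, hs hA⟩
    have hsubℬ : 𝒜ᶜˢ ⊆ powersetCard l univ := fun B hB =>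
      mem_powersetCard.2 ⟨subset_univ _, hℬsized hB⟩
    have hunion : #𝒜 + #(𝒜ᶜˢ) ≤ m.choose l := by
      have h5 := card_union_of_disjoint hdisj
      have hle : #(𝒜 ∪ 𝒜ᶜˢ) ≤ #(powersetCard l (univ : Finset (Fin m))) :=
        card_le_card (union_subset hsub𝒜 hsubℬ)
      rw [card_powersetCard, Finset.card_univ, Fintype.card_fin] at hle
      omega
    have hchoose : m.choose l = (m - 1).choose (l - 1) + (m - 1).choose l := by
      have hcc := Nat.choose_succ_succ' (m - 1) (l - 1)
      have e1 : m - 1 + 1 = m := by omega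
      have e2 : l - 1 + 1 = l := by omega
      rw [e1, e2] at hcc
      exact hcc
    have hsymm : (m - 1).choose (l - 1) = (m - 1).choose l := by
      have h6 : l - 1 = (m - 1) - l := by omega
      rw [h6, Nat.choose_symm (by omega)]
    have hbound : #(𝒜ᶜˢ) ≤ (m - 1).choose l := by omega
    have hfin := card_le_card_shadow_of_small hl hm hℬsized hbound (by omega)
    omega

lemma choose_le_choose_of_le {m a b : ℕ} (hab : a ≤ b) (h2b : 2 * b ≤ m) :
    m.choose a ≤ m.choose b := by
  revert h2b
  induction b, hab using Nat.le_induction with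
  | base => intro _; exact le_rfl
  | succ b hab ih =>
    intro h2b
    exact (ih (by omega)).trans (Nat.choose_le_succ_of_lt_half_left (by omega))

/-- LYM-based bound for antichains all of whose members have size at least `m/2 + 1`. -/
lemma card_le_of_antichain_high {m k : ℕ} (hm : 1 ≤ m) (hk : k = m / 2 + 1)
    {F : Finset (Finset (Fin m))}
    (hanti : ∀ A ∈ F, ∀ B ∈ F, A ≠ B → ¬ A ⊆ B)
    (hsize : ∀ A ∈ F, k ≤ #A) : #F ≤ m.choose k := by
  classical
  have hkm : k ≤ m := by omega
  have hcpos : 0 < m.choose k := Nat.choose_pos hkm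
  have hAC : IsAntichain (· ⊆ ·) (F : Set (Finset (Fin m))) := by
    intro A hA B hB hne hsub
    exact hanti A hA B hB hne hsub
  have hlym := sum_card_slice_div_choose_le_one (𝕜 := ℚ) hAC
  rw [Fintype.card_fin] at hlym
  suffices hsum : (∑ r ∈ Iic m, (#(F # r) : ℚ) / m.choose k) ≤ 1 by
    rw [← sum_div, ← Nat.cast_sum, div_le_one (by positivity)] at hsum
    have hslice : ∑ r ∈ Iic m, #(F # r) = #F := by
      have h := sum_card_slice (𝒜 := F)
      rwa [Fintype.card_fin] at h
    rw [hslice] at hsum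
    exact_mod_cast hsum
  calc ∑ r ∈ Iic m, (#(F # r) : ℚ) / m.choose k
      ≤ ∑ r ∈ Iic m, (#(F # r) : ℚ) / m.choose r := by
        refine sum_le_sum fun r hr => ?_
        rcases (F # r).eq_empty_or_nonempty with he | ⟨A, hA⟩
        · simp [he]
        · obtain ⟨hAF, hAr⟩ := mem_slice.1 hA
          have hkr : k ≤ r := hAr ▸ hsize A hAF
          have hrm : r ≤ m := mem_Iic.1 hr
          have hle : m.choose r ≤ m.choose k := by
            rw [← Nat.choose_symm hrm, ← Nat.choose_symm hkm]
            exact choose_le_choose_of_le (by omega) (by omega)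
          have hrpos : (0 : ℚ) < m.choose r := by
            exact_mod_cast Nat.choose_pos hrm
          exact div_le_div_of_nonneg_left (by positivity) hrpos (by exact_mod_cast hle)
    _ ≤ 1 := by
        rw [Iic_eq_Icc, ← Finset.Ico_add_one_right_eq_Icc, bot_eq_zero, Ico_zero_eq_range]
        exact hlym

/-- Key induction : pushing the minimum level up. -/
lemma key_bound {m k : ℕ} (hm : 1 ≤ m) (hk : k = m / 2 + 1) :
    ∀ N : ℕ, ∀ F : Finset (Finset (Fin m)),
      (∑ A ∈ F, (k - #A)) ≤ N →
      (∀ A ∈ F, ∀ B ∈ F, A ≠ B → ¬ A ⊆ B) →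
      (∀ A ∈ F, ∀ B ∈ F, (A ∩ B).Nonempty) →
      #F ≤ m.choose k := by
  classical
  intro N
  induction N with
  | zero =>
    intro F hsum hanti hint
    refine card_le_of_antichain_high hm hk hanti fun A hA => ?_
    have h0 : k - #A = 0 := Finset.sum_eq_zero_iff.1 (Nat.le_zero.1 hsum) A hA
    rcases Nat.lt_or_ge (#A) k with h | h
    · omega
    · omega
  | succ N ih =>
    intro F hsum hanti hint
    by_cases hall : ∀ A ∈ F, k ≤ #A
    · exact card_le_of_antichain_high hm hk hanti hall
    push_neg at hall
    obtain ⟨A₀, hA₀, hA₀k⟩ := hall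
    have hFne : F.Nonempty := ⟨A₀, hA₀⟩
    obtain ⟨l, hl⟩ : ∃ l, l = (F.image card).min' (hFne.image _) := ⟨_, rfl⟩
    have hlmem : l ∈ F.image card := hl ▸ min'_mem _ _
    obtain ⟨Aₗ, hAₗF, hAₗ⟩ := mem_image.1 hlmem
    have hlmin : ∀ A ∈ F, l ≤ #A := fun A hA => hl ▸ min'_le _ _ (mem_image_of_mem _ hA)
    have hlk : l < k := lt_of_le_of_lt (hlmin A₀ hA₀) hA₀k
    have hlpos : 0 < l := by
      have h1 := hint Aₗ hAₗF Aₗ hAₗF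
      rw [inter_self] at h1
      have h2 := card_pos.2 h1
      omega
    have h2l : 2 * l ≤ m := by omega
    -- the minimum slice and the rest
    have hFlsized : ((F.filter fun A => #A = l : Finset (Finset (Fin m))) :
        Set (Finset (Fin m))).Sized l := fun A hA => by
      simpa using (mem_filter.1 hA).2
    have hFlint : ∀ A ∈ F.filter fun A => #A = l, ∀ B ∈ F.filter fun A => #A = l,
        (A ∩ B).Nonempty := fun A hA B hB =>
      hint A (mem_of_mem_filter _ hA) B (mem_of_mem_filter _ hB)
    have hup : #(F.filter fun A => #A = l) ≤ #(∂⁺ (F.filter fun A => #A = l)) :=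
      card_le_card_upShadow hlpos h2l hFlsized hFlint
    obtain ⟨S, hSsub, hScard⟩ := exists_subset_card_eq hup
    have hSmem : ∀ B ∈ S, ∃ A ∈ F.filter fun A => #A = l, A ⊆ B ∧ #B = l + 1 := by
      intro B hB
      have hBshadow := hSsub hB
      obtain ⟨A, hAFl, hAB⟩ := exists_subset_of_mem_upShadow hBshadow
      exact ⟨A, hAFl, hAB, hFlsized.upShadow hBshadow⟩
    have hSF : ∀ B ∈ S, B ∉ F := by
      intro B hB hBF
      obtain ⟨A, hAFl, hAB, hBcard⟩ := hSmem B hB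
      have hAF : A ∈ F := mem_of_mem_filter _ hAFl
      have hAcard : #A = l := (mem_filter.1 hAFl).2
      have hne : A ≠ B := fun h => by rw [h] at hAcard; omega
      exact hanti A hAF B hBF hne hAB
    -- the new family
    have hdisj : Disjoint (F.filter fun A => ¬ #A = l) S := by
      rw [disjoint_left]
      intro X hX hXS
      exact hSF X hXS (mem_of_mem_filter _ hX)
    have hGcard : #((F.filter fun A => ¬ #A = l) ∪ S) = #F := by
      rw [card_union_of_disjoint hdisj, hScard]
      have := card_filter_add_card_filter_not (s := F) (p := fun A => #A = l)
      omega
    -- antichain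
    have hsizeFc : ∀ A ∈ F.filter fun A => ¬ #A = l, l + 1 ≤ #A := by
      intro A hA
      have h1 := hlmin A (mem_of_mem_filter _ hA)
      have h2 := (mem_filter.1 hA).2
      omega
    have hGanti : ∀ A ∈ (F.filter fun A => ¬ #A = l) ∪ S,
        ∀ B ∈ (F.filter fun A => ¬ #A = l) ∪ S, A ≠ B → ¬ A ⊆ B := by
      intro A hA B hB hne hsub
      rw [mem_union] at hA hB
      obtain hA | hA := hA <;> obtain hB | hB := hB
      · exact hanti A (mem_of_mem_filter _ hA) B (mem_of_mem_filter _ hB) hne hsub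
      · obtain ⟨B', hB', hB'B, hBcard⟩ := hSmem B hB
        exact hne (eq_of_subset_of_card_le hsub (by have := hsizeFc A hA; omega))
      · obtain ⟨A', hA', hA'A, hAcard⟩ := hSmem A hA
        have hA'F : A' ∈ F := mem_of_mem_filter _ hA'
        have hA'card : #A' = l := (mem_filter.1 hA').2
        have hne' : A' ≠ B := fun h => by
          rw [h] at hA'card
          have := hsizeFc B hB
          omega
        exact hanti A' hA'F B (mem_of_mem_filter _ hB) hne' (hA'A.trans hsub)
      · obtain ⟨A', hA', hA'A, hAcard⟩ := hSmem A hA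
        obtain ⟨B', hB', hB'B, hBcard⟩ := hSmem B hB
        exact hne (eq_of_subset_of_card_le hsub (by omega))
    -- intersecting
    have hGw : ∀ X ∈ (F.filter fun A => ¬ #A = l) ∪ S, ∃ X' ∈ F, X' ⊆ X := by
      intro X hX
      rw [mem_union] at hX
      obtain hX | hX := hX
      · exact ⟨X, mem_of_mem_filter _ hX, subset_rfl⟩
      · obtain ⟨X', hX', hX'X, _⟩ := hSmem X hX
        exact ⟨X', mem_of_mem_filter _ hX', hX'X⟩
    have hGint : ∀ A ∈ (F.filter fun A => ¬ #A = l) ∪ S,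
        ∀ B ∈ (F.filter fun A => ¬ #A = l) ∪ S, (A ∩ B).Nonempty := by
      intro A hA B hB
      obtain ⟨A', hA'F, hA'A⟩ := hGw A hA
      obtain ⟨B', hB'F, hB'B⟩ := hGw B hB
      exact (hint A' hA'F B' hB'F).mono (inter_subset_inter hA'A hB'B)
    -- measure decreases
    have hFlpos : 0 < #(F.filter fun A => #A = l) :=
      card_pos.2 ⟨Aₗ, mem_filter.2 ⟨hAₗF, hAₗ⟩⟩
    have hsumS : ∑ A ∈ S, (k - #A) = #S * (k - (l + 1)) :=
      calc ∑ A ∈ S, (k - #A) = ∑ _A ∈ S, (k - (l + 1)) := by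
            refine Finset.sum_congr rfl fun B hB => ?_
            obtain ⟨A', -, -, hBcard⟩ := hSmem B hB
            rw [hBcard]
        _ = #S * (k - (l + 1)) := by rw [Finset.sum_const, smul_eq_mul]
    have hsumFl : ∑ A ∈ F.filter fun A => #A = l, (k - #A) =
        #(F.filter fun A => #A = l) * (k - l) :=
      calc ∑ A ∈ F.filter fun A => #A = l, (k - #A)
          = ∑ _A ∈ F.filter fun A => #A = l, (k - l) := by
            refine Finset.sum_congr rfl fun B hB => ?_
            rw [(mem_filter.1 hB).2]
        _ = #(F.filter fun A => #A = l) * (k - l) := by rw [Finset.sum_const, smul_eq_mul]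
    have hsplit : ∑ A ∈ F.filter fun A => #A = l, (k - #A) +
        ∑ A ∈ F.filter fun A => ¬ #A = l, (k - #A) = ∑ A ∈ F, (k - #A) :=
      Finset.sum_filter_add_sum_filter_not F _ _
    have hsumG : ∑ A ∈ (F.filter fun A => ¬ #A = l) ∪ S, (k - #A) =
        ∑ A ∈ F.filter fun A => ¬ #A = l, (k - #A) + ∑ A ∈ S, (k - #A) :=
      Finset.sum_union hdisj
    have hmul : #(F.filter fun A => #A = l) * (k - (l + 1)) +
        #(F.filter fun A => #A = l) =
        #(F.filter fun A => #A = l) * (k - l) := by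
      have h7 : k - l = (k - (l + 1)) + 1 := by omega
      rw [h7, Nat.mul_succ]
    have hmeasure : ∑ A ∈ (F.filter fun A => ¬ #A = l) ∪ S, (k - #A) ≤ N := by
      rw [hsumG, hsumS, hScard]
      obtain ⟨p, hp⟩ : ∃ p, p = #(F.filter fun A => #A = l) * (k - (l + 1)) := ⟨_, rfl⟩
      obtain ⟨q, hq⟩ : ∃ q, q = #(F.filter fun A => #A = l) * (k - l) := ⟨_, rfl⟩
      rw [← hp]
      rw [← hp, ← hq] at hmul
      rw [hsumFl, ← hq] at hsplit
      omega
    have hfin := ih _ hmeasure hGanti hGint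
    rw [hGcard] at hfin
    exact hfin

end MilnerAux

/-- Milner's theorem for `p = 1`: the maximum size of a family of subsets of an `m`-element
set that is an antichain under inclusion and pairwise intersecting is `C(m, ⌊(m+2)/2⌋)`. -/
theorem milner_p_one (m : ℕ) (hm : 1 ≤ m) :
    IsGreatest {n | ∃ C : Finset (Finset (Fin m)),
        (∀ A ∈ C, ∀ B ∈ C, A ≠ B → ¬ A ⊆ B) ∧
        (∀ A ∈ C, ∀ B ∈ C, (A ∩ B).Nonempty) ∧
        C.card = n}
      (Nat.choose m ((m + 2) / 2)) := by
  classical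
  constructor
  · -- membership : all subsets of size (m+2)/2
    refine ⟨Finset.powersetCard ((m + 2) / 2) Finset.univ, ?_, ?_, ?_⟩
    · intro A hA B hB hne hsub
      rw [Finset.mem_powersetCard] at hA hB
      exact hne (Finset.eq_of_subset_of_card_le hsub (le_of_eq (hB.2.trans hA.2.symm)))
    · intro A hA B hB
      rw [Finset.mem_powersetCard] at hA hB
      rw [← Finset.card_pos]
      have h1 := Finset.card_inter_add_card_union A B
      have h2 : (A ∪ B).card ≤ m := by
        have := Finset.card_le_card (A ∪ B).subset_univ
        rwa [Finset.card_univ, Fintype.card_fin] at this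
      have h3 := hA.2
      have h4 := hB.2
      omega
    · rw [Finset.card_powersetCard, Finset.card_univ, Fintype.card_fin]
  · -- upper bound
    rintro nn ⟨C, hanti, hint, rfl⟩
    exact MilnerAux.key_bound hm (by omega) (∑ A ∈ C, ((m + 2) / 2 - A.card)) C le_rfl hanti hint
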